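/- Let a be an isotropic random vector in ℝⁿ with sub-Gaussian tail P(|aᵀu| ≥ t) ≤ 2exp(−2c̄₀t²) for all unit u and t ≥ 0, and fourth-moment bound (E|aᵀu|⁴)^{1/4} ≤ 2c̄₁ for all unit u. Let τ ∼ U([−Λ, Λ]) independent of a with L₀ := inf_{‖n‖₂=1} E|aᵀn| > 0. Then for all u, v ∈ B₂ⁿ with u ≠ v: P(sign(aᵀu − τ) ≠ sign(aᵀv − τ)) ≥ (‖u − v‖₂/(2Λ))·(L₀ − 4exp(−c̄₀Λ²)); in particular, if 4exp(−c̄₀Λ²) ≤ L₀/2, then P(sign(aᵀu − τ) ≠ sign(aᵀv − τ)) ≥ L₀‖u − v‖₂/(4Λ). -/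

import Mathlib

open MeasureTheory ProbabilityTheory
open scoped RealInnerProductSpace

abbrev EuN (n : ℕ) := EuclideanSpace ℝ (Fin n)

noncomputable def sgn (t : ℝ) : ℝ := if 0 ≤ t then 1 else -1

lemma sgn_ne_iff (x y t : ℝ) : sgn (x - t) ≠ sgn (y - t) ↔ t ∈ Set.Ioc (min x y) (max x y) := by
  simp only [Set.mem_Ioc, min_lt_iff, le_max_iff]
  unfold sgn
  split_ifs with h1 h2 h2 <;> norm_num <;>
    [ (intro h; cases h <;> linarith);
      (exact ⟨Or.inr (by linarith), Or.inl (by linarith)⟩);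
      (exact ⟨Or.inl (by linarith), Or.inr (by linarith)⟩);
      (intro h; exact ⟨by linarith, by linarith⟩) ]

lemma cs_set {α : Type*} [MeasurableSpace α] (ν : Measure α) [IsProbabilityMeasure ν]
    {f : α → ℝ} (hf : AEStronglyMeasurable f ν) (hf2 : Integrable (fun x => f x ^ 2) ν)
    {B : Set α} (hB : MeasurableSet B) :
    ∫ x in B, |f x| ∂ν ≤ Real.sqrt (∫ x, f x ^ 2 ∂ν) * Real.sqrt ((ν B).toReal) := by
  have hconj : (2:ℝ).HolderConjugate 2 := by constructor <;> norm_num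
  have habs : MemLp (fun x => |f x|) (ENNReal.ofReal 2) ν := by
    rw [show ENNReal.ofReal 2 = 2 by norm_num]
    simpa [Real.norm_eq_abs] using ((memLp_two_iff_integrable_sq hf).2 hf2).norm
  have hind : MemLp (B.indicator (fun _ => (1:ℝ))) (ENNReal.ofReal 2) ν := by
    rw [show ENNReal.ofReal 2 = 2 by norm_num]
    exact MemLp.indicator hB (memLp_const 1)
  have key := integral_mul_le_Lp_mul_Lq_of_nonneg hconj
    (f := fun x => |f x|) (g := B.indicator (fun _ => (1:ℝ)))
    (Filter.Eventually.of_forall fun x => abs_nonneg _)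
    (Filter.Eventually.of_forall fun x => Set.indicator_nonneg (fun _ _ => zero_le_one) x)
    habs hind
  have h1 : ∫ x, |f x| * B.indicator (fun _ => (1:ℝ)) x ∂ν = ∫ x in B, |f x| ∂ν := by
    rw [← integral_indicator hB]
    congr 1; ext x
    by_cases hx : x ∈ B <;> simp [hx]
  have h2 : ∫ x, |f x| ^ (2:ℝ) ∂ν = ∫ x, f x ^ 2 ∂ν := by
    congr 1; ext x
    rw [show ((2:ℝ):ℝ) = ((2:ℕ):ℝ) by norm_num, Real.rpow_natCast, sq_abs]
  have h3 : ∫ x, B.indicator (fun _ => (1:ℝ)) x ^ (2:ℝ) ∂ν = (ν B).toReal := by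
    have : ∀ x, B.indicator (fun _ => (1:ℝ)) x ^ (2:ℝ) = B.indicator (fun _ => (1:ℝ)) x := by
      intro x; by_cases hx : x ∈ B <;> simp [hx]
    simp_rw [this]
    simp [integral_indicator_const, hB, Measure.real]
  rw [h1, h2, h3] at key
  calc ∫ x in B, |f x| ∂ν ≤ (∫ x, f x ^ 2 ∂ν) ^ (1/2:ℝ) * ((ν B).toReal) ^ (1/2:ℝ) := key
  _ = _ := by rw [Real.sqrt_eq_rpow, Real.sqrt_eq_rpow]

theorem stmt_18 (n : ℕ) (Ω : Type*) [MeasurableSpace Ω] (μ : Measure Ω) [IsProbabilityMeasure μ]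
    (a : Ω → EuclideanSpace ℝ (Fin n)) (τ : Ω → ℝ) (Λ c₀ c₁ L₀ : ℝ)
    (hΛ : 0 < Λ) (hc₀ : 0 < c₀) (hc₁ : 0 < c₁)
    (hameas : Measurable a) (hτmeas : Measurable τ)
    (hiso : ∀ w : EuclideanSpace ℝ (Fin n), ∫ ω, ⟪a ω, w⟫ ^ 2 ∂μ = ‖w‖ ^ 2)
    (htail : ∀ w : EuclideanSpace ℝ (Fin n), ‖w‖ = 1 → ∀ t : ℝ, 0 ≤ t →
      μ {ω | t ≤ |⟪a ω, w⟫|} ≤ ENNReal.ofReal (2 * Real.exp (-2 * c₀ * t ^ 2)))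
    (hmom : ∀ w : EuclideanSpace ℝ (Fin n), ‖w‖ = 1 →
      Integrable (fun ω => ⟪a ω, w⟫ ^ 4) μ ∧ ∫ ω, ⟪a ω, w⟫ ^ 4 ∂μ ≤ (2 * c₁) ^ 4)
    (hdith : Measure.map τ μ
      = ENNReal.ofReal (1 / (2 * Λ)) • (volume.restrict (Set.Icc (-Λ) Λ)))
    (hindep : IndepFun a τ μ)
    (hL₀pos : 0 < L₀)
    (hL₀ : L₀ = sInf {y : ℝ | ∃ w : EuclideanSpace ℝ (Fin n), ‖w‖ = 1 ∧
      y = ∫ ω, |⟪a ω, w⟫| ∂μ}) :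
    ∀ u v : EuclideanSpace ℝ (Fin n), ‖u‖ ≤ 1 → ‖v‖ ≤ 1 → u ≠ v →
      ENNReal.ofReal (‖u - v‖ / (2 * Λ) * (L₀ - 4 * Real.exp (-c₀ * Λ ^ 2)))
          ≤ μ {ω | sgn (⟪a ω, u⟫ - τ ω) ≠ sgn (⟪a ω, v⟫ - τ ω)} ∧
        (4 * Real.exp (-c₀ * Λ ^ 2) ≤ L₀ / 2 →
          ENNReal.ofReal (L₀ * ‖u - v‖ / (4 * Λ))
            ≤ μ {ω | sgn (⟪a ω, u⟫ - τ ω) ≠ sgn (⟪a ω, v⟫ - τ ω)}) := by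
  intro u v hu hv huv
  -- continuity/measurability of linear functionals
  have hXc : ∀ w : EuN n, Continuous fun x : EuN n => ⟪x, w⟫ := fun w =>
    continuous_id.inner continuous_const
  -- pushforward measures
  set ν : Measure (EuN n) := μ.map a with hν
  set ντ : Measure ℝ := μ.map τ with hντ
  haveI hνprob : IsProbabilityMeasure ν := Measure.isProbabilityMeasure_map hameas.aemeasurable
  haveI hντprob : IsProbabilityMeasure ντ := Measure.isProbabilityMeasure_map hτmeas.aemeasurable
  -- basic transfers
  have hiso' : ∀ w : EuN n, ∫ x, ⟪x, w⟫ ^ 2 ∂ν = ‖w‖ ^ 2 := by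
    intro w
    rw [hν, integral_map hameas.aemeasurable (f := fun x => ⟪x, w⟫ ^ 2) (((hXc w).pow 2).aestronglyMeasurable)]
    exact hiso w
  have hint2 : ∀ w : EuN n, Integrable (fun x => ⟪x, w⟫ ^ 2) ν := by
    intro w
    by_cases hw : w = 0
    · simp [hw, inner_zero_right]
    · have hμint : Integrable (fun ω => ⟪a ω, w⟫ ^ 2) μ := by
        by_contra hni
        have := hiso w
        rw [integral_undef hni] at this
        have : ‖w‖ = 0 := by nlinarith [norm_nonneg w]
        exact hw (norm_eq_zero.1 this)
      exact (integrable_map_measure (((hXc w).pow 2).aestronglyMeasurable)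
        hameas.aemeasurable).2 hμint
  have hint1 : ∀ w : EuN n, Integrable (fun x => |⟪x, w⟫|) ν := by
    intro w
    have h2 : MemLp (fun x => ⟪x, w⟫) 2 ν :=
      (memLp_two_iff_integrable_sq (hXc w).aestronglyMeasurable).2 (hint2 w)
    exact (memLp_one_iff_integrable.1 (h2.mono_exponent (by norm_num))).abs
  have hL₀le : ∀ w : EuN n, ‖w‖ = 1 → L₀ ≤ ∫ x, |⟪x, w⟫| ∂ν := by
    intro w hw
    have heq : ∫ x, |⟪x, w⟫| ∂ν = ∫ ω, |⟪a ω, w⟫| ∂μ := by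
      rw [hν, integral_map hameas.aemeasurable (((hXc w).abs).aestronglyMeasurable)]
    rw [heq, hL₀]
    refine csInf_le ⟨0, ?_⟩ ⟨w, hw, rfl⟩
    rintro y ⟨w', -, rfl⟩
    exact integral_nonneg fun ω => abs_nonneg _
  have htailν : ∀ w : EuN n, ‖w‖ ≤ 1 → ν {x | Λ < |⟪x, w⟫|}
      ≤ ENNReal.ofReal (2 * Real.exp (-2 * c₀ * Λ ^ 2)) := by
    intro w hw
    by_cases hw0 : w = 0
    · have : {x : EuN n | Λ < |⟪x, w⟫|} = ∅ := by
        ext x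
        simp only [Set.mem_setOf_eq, hw0, inner_zero_right, abs_zero,
          Set.mem_empty_iff_false, iff_false, not_lt]
        exact hΛ.le
      rw [this]; simp
    · have hnw : 0 < ‖w‖ := norm_pos_iff.2 hw0
      set w1 : EuN n := ‖w‖⁻¹ • w with hw1def
      have hw1 : ‖w1‖ = 1 := by
        rw [hw1def, norm_smul, norm_inv, norm_norm, inv_mul_cancel₀ hnw.ne']
      have hsub : {x : EuN n | Λ < |⟪x, w⟫|} ⊆ {x : EuN n | Λ ≤ |⟪x, w1⟫|} := by
        intro x hx
        simp only [Set.mem_setOf_eq] at hx ⊢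
        have hip : ⟪x, w1⟫ = ‖w‖⁻¹ * ⟪x, w⟫ := by
          rw [hw1def, real_inner_smul_right]
        rw [hip, abs_mul, abs_of_nonneg (inv_nonneg.2 hnw.le)]
        have h1 : (1:ℝ) ≤ ‖w‖⁻¹ := (one_le_inv₀ hnw).2 hw
        nlinarith [abs_nonneg (⟪x, w⟫), hx]
      calc ν {x : EuN n | Λ < |⟪x, w⟫|} ≤ ν {x : EuN n | Λ ≤ |⟪x, w1⟫|} := measure_mono hsub
        _ = μ {ω | Λ ≤ |⟪a ω, w1⟫|} := by
            rw [hν, Measure.map_apply hameas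
              (measurableSet_le measurable_const ((hXc w1).abs.measurable))]
            rfl
        _ ≤ _ := htail w1 hw1 Λ hΛ.le
  -- the difference vector
  set d : EuN n := u - v with hd
  have hd0 : d ≠ 0 := sub_ne_zero.2 huv
  have hnd : 0 < ‖d‖ := norm_pos_iff.2 hd0
  set n₀ : EuN n := ‖d‖⁻¹ • d with hn₀def
  have hn₀ : ‖n₀‖ = 1 := by
    rw [hn₀def, norm_smul, norm_inv, norm_norm, inv_mul_cancel₀ hnd.ne']
  have hdinner : ∀ x : EuN n, ⟪x, d⟫ = ‖d‖ * ⟪x, n₀⟫ := by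
    intro x
    rw [hn₀def, real_inner_smul_right, ← mul_assoc, mul_inv_cancel₀ hnd.ne', one_mul]
  -- the event as preimage
  set S : Set (EuN n × ℝ) :=
    {p | p.2 ∈ Set.Ioc (min ⟪p.1, u⟫ ⟪p.1, v⟫) (max ⟪p.1, u⟫ ⟪p.1, v⟫)} with hS
  have hSmeas : MeasurableSet S := by
    have hm1 : Measurable fun p : EuN n × ℝ => min ⟪p.1, u⟫ ⟪p.1, v⟫ :=
      (((hXc u).comp continuous_fst).min ((hXc v).comp continuous_fst)).measurable
    have hm2 : Measurable fun p : EuN n × ℝ => max ⟪p.1, u⟫ ⟪p.1, v⟫ :=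
      (((hXc u).comp continuous_fst).max ((hXc v).comp continuous_fst)).measurable
    exact (measurableSet_lt hm1 measurable_snd).inter (measurableSet_le measurable_snd hm2)
  have hEvent : {ω | sgn (⟪a ω, u⟫ - τ ω) ≠ sgn (⟪a ω, v⟫ - τ ω)}
      = (fun ω => (a ω, τ ω)) ⁻¹' S :=
    Set.ext fun ω => sgn_ne_iff _ _ _
  have hμE : μ {ω | sgn (⟪a ω, u⟫ - τ ω) ≠ sgn (⟪a ω, v⟫ - τ ω)} = (ν.prod ντ) S := by
    rw [hEvent, ← Measure.map_apply (hameas.prodMk hτmeas) hSmeas,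
      (indepFun_iff_map_prod_eq_prod_map_map hameas.aemeasurable hτmeas.aemeasurable).1 hindep]
  -- good set A
  set A : Set (EuN n) := {x | |⟪x, u⟫| ≤ Λ ∧ |⟪x, v⟫| ≤ Λ} with hAdef
  have hA : MeasurableSet A :=
    (measurableSet_le (hXc u).abs.measurable measurable_const).inter
      (measurableSet_le (hXc v).abs.measurable measurable_const)
  -- fiber computation
  have hfiber : ∀ x : EuN n, ντ (Prod.mk x ⁻¹' S)
      = ENNReal.ofReal (1 / (2 * Λ)) *
        volume (Set.Ioc (min ⟪x, u⟫ ⟪x, v⟫) (max ⟪x, u⟫ ⟪x, v⟫) ∩ Set.Icc (-Λ) Λ) := by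
    intro x
    have : Prod.mk x ⁻¹' S = Set.Ioc (min ⟪x, u⟫ ⟪x, v⟫) (max ⟪x, u⟫ ⟪x, v⟫) := rfl
    rw [this, hdith, Measure.smul_apply, Measure.restrict_apply measurableSet_Ioc,
      smul_eq_mul]
  have hfiberA : ∀ x ∈ A, ντ (Prod.mk x ⁻¹' S)
      = ENNReal.ofReal (1 / (2 * Λ)) * ENNReal.ofReal |⟪x, d⟫| := by
    intro x hx
    obtain ⟨hxu, hxv⟩ := hx
    rw [hfiber x]
    have hsub2 : Set.Ioc (min ⟪x, u⟫ ⟪x, v⟫) (max ⟪x, u⟫ ⟪x, v⟫) ⊆ Set.Icc (-Λ) Λ := by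
      intro t ht
      obtain ⟨ht1, ht2⟩ := ht
      constructor
      · have : -Λ ≤ min ⟪x, u⟫ ⟪x, v⟫ := le_min (by cases abs_le.1 hxu; linarith)
          (by cases abs_le.1 hxv; linarith)
        linarith
      · have : max ⟪x, u⟫ ⟪x, v⟫ ≤ Λ := max_le (abs_le.1 hxu).2 (abs_le.1 hxv).2
        linarith
    rw [Set.inter_eq_self_of_subset_left hsub2, Real.volume_Ioc]
    congr 1
    rw [max_sub_min_eq_abs, hd, inner_sub_right, abs_sub_comm]
  -- lower bound chain in ENNReal
  have hprod : (ν.prod ντ) S = ∫⁻ x, ντ (Prod.mk x ⁻¹' S) ∂ν := Measure.prod_apply hSmeas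
  have hIA_int : IntegrableOn (fun x => |⟪x, d⟫|) A ν := (hint1 d).integrableOn
  have step1 : ENNReal.ofReal (1 / (2 * Λ)) * ENNReal.ofReal (∫ x in A, |⟪x, d⟫| ∂ν)
      ≤ (ν.prod ντ) S := by
    rw [hprod]
    have h1 : ∫⁻ x in A, ντ (Prod.mk x ⁻¹' S) ∂ν ≤ ∫⁻ x, ντ (Prod.mk x ⁻¹' S) ∂ν :=
      setLIntegral_le_lintegral _ _
    refine le_trans ?_ h1
    have h2 : ∫⁻ x in A, ντ (Prod.mk x ⁻¹' S) ∂ν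
        = ∫⁻ x in A, ENNReal.ofReal (1 / (2 * Λ)) * ENNReal.ofReal |⟪x, d⟫| ∂ν := by
      refine setLIntegral_congr_fun hA ?_
      intro x hx
      exact hfiberA x hx
    rw [h2, lintegral_const_mul _ ((hXc d).abs.measurable.ennreal_ofReal)]
    gcongr
    rw [ofReal_integral_eq_lintegral_ofReal hIA_int
      (Filter.Eventually.of_forall fun x => abs_nonneg _)]
  -- bound the integral over A from below
  have htotal : ‖d‖ * L₀ ≤ ∫ x, |⟪x, d⟫| ∂ν := by
    have : ∫ x, |⟪x, d⟫| ∂ν = ‖d‖ * ∫ x, |⟪x, n₀⟫| ∂ν := by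
      rw [← integral_const_mul]
      congr 1; ext x
      rw [hdinner x, abs_mul, abs_of_nonneg hnd.le]
    rw [this]
    exact mul_le_mul_of_nonneg_left (hL₀le n₀ hn₀) hnd.le
  -- tail pieces
  have hexp2 : Real.sqrt (2 * Real.exp (-2 * c₀ * Λ ^ 2)) ≤ 2 * Real.exp (-c₀ * Λ ^ 2) := by
    have he : Real.exp (-c₀ * Λ ^ 2) ^ 2 = Real.exp (-2 * c₀ * Λ ^ 2) := by
      rw [sq, ← Real.exp_add]; congr 1; ring
    have hsq : 2 * Real.exp (-2 * c₀ * Λ ^ 2) ≤ (2 * Real.exp (-c₀ * Λ ^ 2)) ^ 2 := by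
      rw [mul_pow, he]
      nlinarith [Real.exp_pos (-2 * c₀ * Λ ^ 2)]
    calc Real.sqrt (2 * Real.exp (-2 * c₀ * Λ ^ 2))
        ≤ Real.sqrt ((2 * Real.exp (-c₀ * Λ ^ 2)) ^ 2) := Real.sqrt_le_sqrt hsq
      _ = 2 * Real.exp (-c₀ * Λ ^ 2) := Real.sqrt_sq (by positivity)
  have hBbound : ∀ w : EuN n, ‖w‖ ≤ 1 →
      ∫ x in {x : EuN n | Λ < |⟪x, w⟫|}, |⟪x, d⟫| ∂ν ≤ ‖d‖ * (2 * Real.exp (-c₀ * Λ ^ 2)) := by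
    intro w hw
    have hBmeas : MeasurableSet {x : EuN n | Λ < |⟪x, w⟫|} :=
      measurableSet_lt measurable_const (hXc w).abs.measurable
    have hcs := cs_set ν (hXc d).aestronglyMeasurable (hint2 d) hBmeas
    rw [hiso' d] at hcs
    have h1 : Real.sqrt (‖d‖ ^ 2) = ‖d‖ := Real.sqrt_sq (norm_nonneg d)
    rw [h1] at hcs
    refine hcs.trans ?_
    have h2 : (ν {x : EuN n | Λ < |⟪x, w⟫|}).toReal ≤ 2 * Real.exp (-2 * c₀ * Λ ^ 2) :=
      ENNReal.toReal_le_of_le_ofReal (by positivity) (htailν w hw)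
    calc ‖d‖ * Real.sqrt ((ν {x : EuN n | Λ < |⟪x, w⟫|}).toReal)
        ≤ ‖d‖ * Real.sqrt (2 * Real.exp (-2 * c₀ * Λ ^ 2)) := by
          exact mul_le_mul_of_nonneg_left (Real.sqrt_le_sqrt h2) (norm_nonneg d)
      _ ≤ ‖d‖ * (2 * Real.exp (-c₀ * Λ ^ 2)) :=
          mul_le_mul_of_nonneg_left hexp2 (norm_nonneg d)
  -- complement bound
  set Bu : Set (EuN n) := {x : EuN n | Λ < |⟪x, u⟫|} with hBu
  set Bv : Set (EuN n) := {x : EuN n | Λ < |⟪x, v⟫|} with hBv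
  have hBumeas : MeasurableSet Bu := measurableSet_lt measurable_const (hXc u).abs.measurable
  have hBvmeas : MeasurableSet Bv := measurableSet_lt measurable_const (hXc v).abs.measurable
  have hAc : Aᶜ = Bu ∪ Bv := by
    ext x
    simp only [hAdef, hBu, hBv, Set.mem_compl_iff, Set.mem_setOf_eq, Set.mem_union, not_and_or,
      not_le]
  have hcompl : ∫ x in Aᶜ, |⟪x, d⟫| ∂ν ≤ ‖d‖ * (4 * Real.exp (-c₀ * Λ ^ 2)) := by
    have hmono : ∫ x in Aᶜ, |⟪x, d⟫| ∂ν ≤ ∫ x in Bu, |⟪x, d⟫| ∂ν + ∫ x in Bv, |⟪x, d⟫| ∂ν := by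
      rw [hAc]
      have hun : Bu ∪ Bv = Bu ∪ (Bv \ Bu) := (Set.union_diff_self).symm
      rw [hun, setIntegral_union Set.disjoint_sdiff_right (hBvmeas.diff hBumeas)
        (hint1 d).integrableOn (hint1 d).integrableOn]
      have h3 : ∫ x in Bv \ Bu, |⟪x, d⟫| ∂ν ≤ ∫ x in Bv, |⟪x, d⟫| ∂ν :=
        setIntegral_mono_set (hint1 d).integrableOn
          (Filter.Eventually.of_forall fun x => abs_nonneg _)
          (HasSubset.Subset.eventuallyLE Set.diff_subset)
      linarith
    refine hmono.trans ?_
    have := hBbound u hu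
    have := hBbound v hv
    rw [hBu, hBv]
    linarith [hBbound u hu, hBbound v hv]
  have hIA : ‖d‖ * (L₀ - 4 * Real.exp (-c₀ * Λ ^ 2)) ≤ ∫ x in A, |⟪x, d⟫| ∂ν := by
    have hsplit : ∫ x in A, |⟪x, d⟫| ∂ν + ∫ x in Aᶜ, |⟪x, d⟫| ∂ν = ∫ x, |⟪x, d⟫| ∂ν :=
      integral_add_compl hA (hint1 d)
    nlinarith [htotal, hcompl]
  -- conclude
  constructor
  · rw [hμE]
    refine le_trans ?_ step1
    rw [← ENNReal.ofReal_mul (by positivity : (0:ℝ) ≤ 1 / (2 * Λ))]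
    apply ENNReal.ofReal_le_ofReal
    calc ‖u - v‖ / (2 * Λ) * (L₀ - 4 * Real.exp (-c₀ * Λ ^ 2))
        = 1 / (2 * Λ) * (‖d‖ * (L₀ - 4 * Real.exp (-c₀ * Λ ^ 2))) := by rw [hd]; ring
      _ ≤ 1 / (2 * Λ) * ∫ x in A, |⟪x, d⟫| ∂ν :=
          mul_le_mul_of_nonneg_left hIA (by positivity)
  · intro hsmall
    rw [hμE]
    refine le_trans ?_ step1
    rw [← ENNReal.ofReal_mul (by positivity : (0:ℝ) ≤ 1 / (2 * Λ))]
    apply ENNReal.ofReal_le_ofReal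
    calc L₀ * ‖u - v‖ / (4 * Λ) = 1 / (2 * Λ) * (‖d‖ * (L₀ / 2)) := by rw [hd]; ring
      _ ≤ 1 / (2 * Λ) * (‖d‖ * (L₀ - 4 * Real.exp (-c₀ * Λ ^ 2))) := by
          have : L₀ / 2 ≤ L₀ - 4 * Real.exp (-c₀ * Λ ^ 2) := by linarith
          have h2 : ‖d‖ * (L₀ / 2) ≤ ‖d‖ * (L₀ - 4 * Real.exp (-c₀ * Λ ^ 2)) :=
            mul_le_mul_of_nonneg_left this hnd.le
          exact mul_le_mul_of_nonneg_left h2 (by positivity)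
      _ ≤ 1 / (2 * Λ) * ∫ x in A, |⟪x, d⟫| ∂ν :=
          mul_le_mul_of_nonneg_left hIA (by positivity)
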